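/- arXiv:2507.13777 — 2 statements merged into one kernel-verified Lean document; each statement's English description precedes it below -/
import Mathlib

section
/- Every finite simple connected graph G satisfies dim_l(G) ≤ ((ω(G)−1)/ω(G))·n(G), with equality if and only if G is the complete graph K_{n(G)}. -/
open SimpleGraph

variable {V : Type*} [Fintype V] [DecidableEq V]

/-- `S` is a local resolving set of `G`. -/
def IsLocalResolving (G : SimpleGraph V) (S : Finset V) : Prop :=
  ∀ u v : V, G.Adj u v → u ∉ S → v ∉ S → ∃ w ∈ S, G.dist u w ≠ G.dist v w

/-- The local metric dimension of `G`. -/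
noncomputable def dimL (G : SimpleGraph V) : ℕ :=
  sInf {k | ∃ S : Finset V, S.card = k ∧ IsLocalResolving G S}

/-- `S` is a local adjacency resolving set of `G`. -/
def IsLocalAdjResolving (G : SimpleGraph V) (S : Finset V) : Prop :=
  ∀ u v : V, G.Adj u v → u ∉ S → v ∉ S → ∃ w ∈ S, Xor' (G.Adj w u) (G.Adj w v)

/-- The local adjacency metric dimension of `G`. -/
noncomputable def dimAL (G : SimpleGraph V) : ℕ :=
  sInf {k | ∃ S : Finset V, S.card = k ∧ IsLocalAdjResolving G S}

/-- `S` is a resolving set of `G`. -/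
def IsResolving (G : SimpleGraph V) (S : Finset V) : Prop :=
  ∀ u v : V, u ≠ v → u ∉ S → v ∉ S → ∃ w ∈ S, G.dist u w ≠ G.dist v w

/-- The metric dimension of `G`. -/
noncomputable def dimM (G : SimpleGraph V) : ℕ :=
  sInf {k | ∃ S : Finset V, S.card = k ∧ IsResolving G S}

/-- `S` is an adjacency resolving set of `G`. -/
def IsAdjResolving (G : SimpleGraph V) (S : Finset V) : Prop :=
  ∀ u v : V, u ≠ v → u ∉ S → v ∉ S → ∃ w ∈ S, Xor' (G.Adj w u) (G.Adj w v)

/-- The adjacency metric dimension of `G`. -/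
noncomputable def dimA (G : SimpleGraph V) : ℕ :=
  sInf {k | ∃ S : Finset V, S.card = k ∧ IsAdjResolving G S}

set_option linter.unusedSectionVars false
set_option maxHeartbeats 1000000

open scoped Classical

private lemma nodup_not_mem_left {L l1 l2 : List V} {b : V} (hnd : L.Nodup)
    (h : L = l1 ++ b :: l2) : b ∉ l1 := by
  subst h
  rw [List.nodup_append] at hnd
  intro hb
  exact hnd.2.2 b hb b List.mem_cons_self rfl

/-- The greedy rescued colouring. -/
private lemma greedy_exists (G : SimpleGraph V) (t : ℕ) (pen : V → Finset V) (L : List V)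
    (hnd : L.Nodup)
    (hpen : ∀ l1 b l2, L = l1 ++ b :: l2 → (pen b : Finset V) ⊆ l1.toFinset)
    (hclique : ∀ l1 b l2, L = l1 ++ b :: l2 → ∀ D : Finset V,
        D ⊆ l1.toFinset → (∀ u ∈ D, G.Adj u b) → G.IsClique (D : Set V) →
        D.card + (pen b).card < t) :
    ∃ c : V → ℕ,
      (∀ b ∈ L, c b < t) ∧
      (∀ b ∈ L, ∀ w ∈ pen b, c b ≠ c w) ∧
      (∀ u ∈ L, ∀ v ∈ L, G.Adj u v → c u = c v →
        ∃ w ∈ L, c w ≠ c u ∧ Xor' (G.Adj w u) (G.Adj w v)) := by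
  induction L using List.reverseRecOn with
  | nil => exact ⟨fun _ => 0, by simp, by simp, by simp⟩
  | append_singleton L' b ih =>
    have hndL' : L'.Nodup := (List.nodup_append.mp hnd).1
    have hbL' : b ∉ L' := by
      rw [List.nodup_append] at hnd
      intro hb
      exact hnd.2.2 b hb b (List.mem_singleton.mpr rfl) rfl
    -- restrict hypotheses to L'
    have hpen' : ∀ l1 x l2, L' = l1 ++ x :: l2 → (pen x : Finset V) ⊆ l1.toFinset := by
      intro l1 x l2 hdec
      exact hpen l1 x (l2 ++ [b]) (by rw [hdec]; simp)
    have hclique' : ∀ l1 x l2, L' = l1 ++ x :: l2 → ∀ D : Finset V,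
        D ⊆ l1.toFinset → (∀ u ∈ D, G.Adj u x) → G.IsClique (D : Set V) →
        D.card + (pen x).card < t := by
      intro l1 x l2 hdec
      exact hclique l1 x (l2 ++ [b]) (by rw [hdec]; simp)
    obtain ⟨c, hc1, hc2, hc3⟩ := ih hndL' hpen' hclique'
    -- dangerous vertices
    set F : Finset V := L'.toFinset.filter (fun u => G.Adj u b ∧
        ¬ ∃ w ∈ L', c w ≠ c u ∧ Xor' (G.Adj w u) (G.Adj w b)) with hF
    set DC : Finset ℕ := F.image c with hDC
    set PC : Finset ℕ := (pen b).image c with hPC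
    -- representatives
    have hrep : ∀ j ∈ DC, ∃ u ∈ F, c u = j := by
      intro j hj
      simpa using Finset.mem_image.mp hj
    let g : ℕ → V := fun j => if h : ∃ u ∈ F, c u = j then h.choose else b
    have hg : ∀ j ∈ DC, g j ∈ F ∧ c (g j) = j := by
      intro j hj
      have h := hrep j hj
      simp only [g, dif_pos h]
      exact ⟨h.choose_spec.1, h.choose_spec.2⟩
    set D : Finset V := DC.image g with hDdef
    have hDF : D ⊆ F := by
      intro x hx
      obtain ⟨j, hj, rfl⟩ := Finset.mem_image.mp hx
      exact (hg j hj).1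
    have hDcard : D.card = DC.card := by
      apply Finset.card_image_of_injOn
      intro j hj j' hj' hgg
      rw [← (hg j hj).2, ← (hg j' hj').2, hgg]
    -- D is a clique
    have hDadj : ∀ u ∈ D, G.Adj u b := by
      intro u hu
      exact ((Finset.mem_filter.mp (hDF hu)).2).1
    have hDclique : G.IsClique (D : Set V) := by
      intro x hx y hy hxy
      obtain ⟨j, hj, rfl⟩ := Finset.mem_image.mp (Finset.mem_coe.mp hx)
      obtain ⟨j', hj', rfl⟩ := Finset.mem_image.mp (Finset.mem_coe.mp hy)
      have hcj := (hg j hj).2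
      have hcj' := (hg j' hj').2
      have hjj' : j ≠ j' := fun h => hxy (by rw [h])
      by_contra hadj
      -- then g j' rescues g j
      have hmemF := (hg j hj).1
      have : ∃ w ∈ L', c w ≠ c (g j) ∧ Xor' (G.Adj w (g j)) (G.Adj w b) := by
        refine ⟨g j', ?_, ?_, ?_⟩
        · exact List.mem_toFinset.mp (Finset.mem_filter.mp (hg j' hj').1).1
        · rw [hcj, hcj']; exact fun h => hjj' h.symm
        · exact Or.inr ⟨hDadj _ (Finset.mem_image_of_mem g hj'), fun h => hadj h.symm⟩
      exact (Finset.mem_filter.mp hmemF).2.2 this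
    have hDsub : D ⊆ L'.toFinset := fun x hx => (Finset.mem_filter.mp (hDF hx)).1
    have hcard : D.card + (pen b).card < t :=
      hclique L' b [] rfl D hDsub hDadj hDclique
    have hunion : (DC ∪ PC).card < t := by
      calc (DC ∪ PC).card ≤ DC.card + PC.card := Finset.card_union_le _ _
        _ ≤ D.card + (pen b).card := by
            rw [hDcard]
            exact Nat.add_le_add_left (Finset.card_image_le) _
        _ < t := hcard
    obtain ⟨j, hjt, hjfree⟩ : ∃ j ∈ Finset.range t, j ∉ DC ∪ PC := by
      by_contra hx
      push_neg at hx
      have hsub : Finset.range t ⊆ DC ∪ PC := hx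
      have := Finset.card_le_card hsub
      rw [Finset.card_range] at this
      omega
    rw [Finset.mem_range] at hjt
    refine ⟨Function.update c b j, ?_, ?_, ?_⟩
    · intro x hx
      rcases List.mem_append.mp hx with hx | hx
      · rw [Function.update_of_ne (fun h => hbL' (by rw [← h]; exact hx))]
        exact hc1 x hx
      · rw [List.mem_singleton.mp hx, Function.update_self]
        exact hjt
    · intro x hx w hw
      rcases List.mem_append.mp hx with hx | hx
      · have hxb : x ≠ b := fun h => hbL' (by rw [← h]; exact hx)
        -- w earlier than x in L', in particular w ≠ b
        obtain ⟨l1, l2, hdec⟩ := List.append_of_mem hx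
        have hwl1 : w ∈ l1.toFinset := hpen' l1 x l2 hdec hw
        have hwb : w ≠ b := by
          intro h
          subst h
          exact hbL' (by rw [hdec]; exact List.mem_append_left _ (List.mem_toFinset.mp hwl1))
        rw [Function.update_of_ne hxb, Function.update_of_ne hwb]
        exact hc2 x hx w hw
      · have hxb := List.mem_singleton.mp hx
        rw [hxb] at hw ⊢
        have hwL' : w ∈ L'.toFinset := hpen L' b [] rfl hw
        have hwb : w ≠ b := fun h => hbL' (h ▸ List.mem_toFinset.mp hwL')
        rw [Function.update_self, Function.update_of_ne hwb]
        intro hcw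
        apply hjfree
        exact Finset.mem_union_right _ (Finset.mem_image.mpr ⟨w, hw, hcw.symm⟩)
    · intro u hu v hv hadj hcc
      rcases List.mem_append.mp hu with hu | hu <;> rcases List.mem_append.mp hv with hv | hv
      · -- both old
        have hub : u ≠ b := fun h => hbL' (by rw [← h]; exact hu)
        have hvb : v ≠ b := fun h => hbL' (by rw [← h]; exact hv)
        rw [Function.update_of_ne hub, Function.update_of_ne hvb] at hcc
        obtain ⟨w, hw, hwc, hwx⟩ := hc3 u hu v hv hadj hcc
        have hwb : w ≠ b := fun h => hbL' (by rw [← h]; exact hw)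
        refine ⟨w, List.mem_append_left _ hw, ?_, hwx⟩
        rw [Function.update_of_ne hwb, Function.update_of_ne hub]
        exact hwc
      · -- u old, v = b
        have hvb' := List.mem_singleton.mp hv
        rw [hvb'] at hcc hadj ⊢
        have hub : u ≠ b := fun h => hbL' (by rw [← h]; exact hu)
        rw [Function.update_of_ne hub, Function.update_self] at hcc
        have hres : ∃ w ∈ L', c w ≠ c u ∧ Xor' (G.Adj w u) (G.Adj w b) := by
          by_contra hno
          apply hjfree
          apply Finset.mem_union_left
          apply Finset.mem_image.mpr
          exact ⟨u, Finset.mem_filter.mpr ⟨List.mem_toFinset.mpr hu, hadj, hno⟩, hcc ▸ rfl⟩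
        obtain ⟨w, hw, hwc, hwx⟩ := hres
        have hwb : w ≠ b := fun h => hbL' (by rw [← h]; exact hw)
        refine ⟨w, List.mem_append_left _ hw, ?_, hwx⟩
        rw [Function.update_of_ne hwb, Function.update_of_ne hub]
        exact hwc
      · -- u = b, v old
        have hub' := List.mem_singleton.mp hu
        rw [hub'] at hcc hadj ⊢
        have hvb : v ≠ b := fun h => hbL' (by rw [← h]; exact hv)
        rw [Function.update_of_ne hvb, Function.update_self] at hcc
        have hres : ∃ w ∈ L', c w ≠ c v ∧ Xor' (G.Adj w v) (G.Adj w b) := by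
          by_contra hno
          apply hjfree
          apply Finset.mem_union_left
          apply Finset.mem_image.mpr
          exact ⟨v, Finset.mem_filter.mpr ⟨List.mem_toFinset.mpr hv, hadj.symm, hno⟩, hcc ▸ rfl⟩
        obtain ⟨w, hw, hwc, hwx⟩ := hres
        have hwb : w ≠ b := fun h => hbL' (by rw [← h]; exact hw)
        refine ⟨w, List.mem_append_left _ hw, ?_, ?_⟩
        · rw [Function.update_of_ne hwb, Function.update_self]
          intro h
          exact hwc (by rw [h, ← hcc])
        · exact hwx.symm
      · -- u = b, v = b
        rw [List.mem_singleton.mp hu, List.mem_singleton.mp hv] at hadj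
        exact absurd hadj (G.irrefl)

private lemma dimL_le_of_good (G : SimpleGraph V) (W : Finset V)
    (hgood : ∀ u ∈ W, ∀ v ∈ W, G.Adj u v → ∃ w, w ∉ W ∧ Xor' (G.Adj w u) (G.Adj w v)) :
    dimL G ≤ Fintype.card V - W.card := by
  apply Nat.sInf_le
  refine ⟨Finset.univ \ W, ?_, ?_⟩
  · rw [Finset.card_sdiff_of_subset (Finset.subset_univ W), Finset.card_univ]
  · intro u v huv hu hv
    have hu' : u ∈ W := by
      by_contra h
      exact hu (Finset.mem_sdiff.mpr ⟨Finset.mem_univ u, h⟩)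
    have hv' : v ∈ W := by
      by_contra h
      exact hv (Finset.mem_sdiff.mpr ⟨Finset.mem_univ v, h⟩)
    obtain ⟨w, hw, hx⟩ := hgood u hu' v hv' huv
    refine ⟨w, Finset.mem_sdiff.mpr ⟨Finset.mem_univ w, hw⟩, ?_⟩
    rcases hx with ⟨h1, h2⟩ | ⟨h1, h2⟩
    · have d1 : G.dist u w = 1 := dist_eq_one_iff_adj.mpr h1.symm
      have d2 : G.dist v w ≠ 1 := fun h => h2 (dist_eq_one_iff_adj.mp h).symm
      rw [d1]
      exact fun h => d2 h.symm
    · have d1 : G.dist v w = 1 := dist_eq_one_iff_adj.mpr h1.symm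
      have d2 : G.dist u w ≠ 1 := fun h => h2 (dist_eq_one_iff_adj.mp h).symm
      rw [d1]
      exact d2


/-- From a rescued colouring on a list `L` (whose set is `U`), a largest colour class. -/
private lemma max_class (U : Finset V) (t : ℕ) (ht : 1 ≤ t) (c : V → ℕ)
    (hlt : ∀ b ∈ U, c b < t) :
    ∃ j, U.card ≤ t * (U.filter (fun x => c x = j)).card := by
  obtain ⟨j, hj, hmax⟩ := (Finset.range t).exists_max_image
      (fun j => (U.filter (fun x => c x = j)).card) ⟨0, Finset.mem_range.mpr ht⟩
  refine ⟨j, ?_⟩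
  have hsum : U.card = ∑ b ∈ Finset.range t, (U.filter fun x => c x = b).card :=
    Finset.card_eq_sum_card_fiberwise (fun x hx => Finset.mem_range.mpr (hlt x hx))
  calc U.card = ∑ b ∈ Finset.range t, (U.filter fun x => c x = b).card := hsum
    _ ≤ ∑ _b ∈ Finset.range t, (U.filter fun x => c x = j).card :=
        Finset.sum_le_sum (fun i hi => hmax i hi)
    _ = t * (U.filter fun x => c x = j).card := by
        rw [Finset.sum_const, Finset.card_range, smul_eq_mul]

/-- Main construction: a colour class of the rescued colouring of all of `V`. -/
private lemma exists_class (G : SimpleGraph V) [Nonempty V] :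
    ∃ cc : ℕ, cc ≤ Fintype.card V ∧ Fintype.card V ≤ G.cliqueNum * cc ∧
      dimL G ≤ Fintype.card V - cc := by
  set t := G.cliqueNum with htdef
  have ht1 : 1 ≤ t := by
    obtain ⟨v⟩ := ‹Nonempty V›
    have hclv : G.IsClique ({v} : Finset V) := by simp [SimpleGraph.isClique_iff, Set.pairwise_singleton]
    have := @SimpleGraph.IsClique.card_le_cliqueNum _ G _ _ hclv
    simpa using this
  set L := Finset.univ.toList (α := V) with hLdef
  have hLnd : L.Nodup := Finset.nodup_toList _
  have hLmem : ∀ x : V, x ∈ L := fun x => (Finset.mem_toList).mpr (Finset.mem_univ x)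
  obtain ⟨c, hc1, _hc2, hc3⟩ := greedy_exists G t (fun _ => ∅) L hLnd
    (by intro l1 b l2 _; simp)
    (by
      intro l1 b l2 hdec D hD hDadj hDcl
      have hbD : b ∉ D := fun h => nodup_not_mem_left hLnd hdec (List.mem_toFinset.mp (hD h))
      have hclB : G.IsClique (insert b (D : Set V)) := by
        apply hDcl.insert
        intro y hy hne
        exact (hDadj y (Finset.mem_coe.mp hy)).symm
      have : (insert b D).card ≤ t := by
        have h2 : G.IsClique ((insert b D : Finset V) : Set V) := by
          rw [Finset.coe_insert]; exact hclB
        exact @SimpleGraph.IsClique.card_le_cliqueNum _ G _ _ h2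
      rw [Finset.card_insert_of_notMem hbD] at this
      simp only [Finset.card_empty]
      omega)
  obtain ⟨j, hj⟩ := max_class Finset.univ t ht1 c (fun b _ => hc1 b (hLmem b))
  set W := Finset.univ.filter (fun x => c x = j) with hW
  refine ⟨W.card, Finset.card_le_card (Finset.filter_subset _ _) |>.trans (by rw [Finset.card_univ]), ?_, ?_⟩
  · rw [Finset.card_univ] at hj; exact hj
  · apply dimL_le_of_good
    intro u hu v hv hadj
    have hcu : c u = j := (Finset.mem_filter.mp hu).2
    have hcv : c v = j := (Finset.mem_filter.mp hv).2
    obtain ⟨w, hwL, hwc, hwx⟩ := hc3 u (hLmem u) v (hLmem v) hadj (by rw [hcu, hcv])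
    refine ⟨w, ?_, hwx⟩
    intro hwW
    exact hwc (by rw [(Finset.mem_filter.mp hwW).2, hcu])

private lemma cliqueNum_top [Nonempty V] :
    (⊤ : SimpleGraph V).cliqueNum = Fintype.card V := by
  apply le_antisymm
  · obtain ⟨s, hs⟩ := (⊤ : SimpleGraph V).exists_isNClique_cliqueNum
    rw [← hs.card_eq]
    exact Finset.card_le_univ s
  · have hcl : (⊤ : SimpleGraph V).IsClique (Finset.univ : Finset V) := by
      intro x _ y _ hxy
      exact hxy
    have := @SimpleGraph.IsClique.card_le_cliqueNum _ (⊤ : SimpleGraph V) _ _ hcl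
    rwa [Finset.card_univ] at this

private lemma dimL_le_pred (G : SimpleGraph V) [Nonempty V] :
    dimL G ≤ Fintype.card V - 1 := by
  obtain ⟨v⟩ := ‹Nonempty V›
  apply Nat.sInf_le
  refine ⟨Finset.univ.erase v, ?_, ?_⟩
  · rw [Finset.card_erase_of_mem (Finset.mem_univ v), Finset.card_univ]
  · intro u w hadj hu hw
    have hu' : u = v := by
      by_contra h
      exact hu (Finset.mem_erase.mpr ⟨h, Finset.mem_univ u⟩)
    have hw' : w = v := by
      by_contra h
      exact hw (Finset.mem_erase.mpr ⟨h, Finset.mem_univ w⟩)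
    rw [hu', hw'] at hadj
    exact absurd hadj (G.irrefl)

private lemma dimL_nonempty (G : SimpleGraph V) :
    {k | ∃ S : Finset V, S.card = k ∧ IsLocalResolving G S}.Nonempty := by
  refine ⟨Finset.univ.card, Finset.univ, rfl, ?_⟩
  intro u v hadj hu _
  exact absurd (Finset.mem_univ u) hu

private lemma dimL_top [Nonempty V] :
    dimL (⊤ : SimpleGraph V) = Fintype.card V - 1 := by
  apply le_antisymm (dimL_le_pred _)
  have hmem := Nat.sInf_mem (dimL_nonempty (⊤ : SimpleGraph V))
  obtain ⟨S, hcard, hres⟩ := hmem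
  rw [show dimL (⊤ : SimpleGraph V) = S.card from hcard.symm]
  by_contra h
  push_neg at h
  have hS : S.card < Fintype.card V - 1 := h
  have hcompl : 1 < (Finset.univ \ S).card := by
    rw [Finset.card_sdiff_of_subset (Finset.subset_univ S), Finset.card_univ]
    omega
  obtain ⟨u, hu, v, hv, huv⟩ := Finset.one_lt_card.mp hcompl
  have hu' : u ∉ S := (Finset.mem_sdiff.mp hu).2
  have hv' : v ∉ S := (Finset.mem_sdiff.mp hv).2
  obtain ⟨w, hwS, hwd⟩ := hres u v (by exact huv) hu' hv'
  apply hwd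
  have hwu : u ≠ w := fun h => hu' (h ▸ hwS)
  have hwv : v ≠ w := fun h => hv' (h ▸ hwS)
  rw [dist_eq_one_iff_adj.mpr (by exact hwu), dist_eq_one_iff_adj.mpr (by exact hwv)]

private lemma cons_decomp {a x : V} {L l1 l2 : List V} (h : a :: L = l1 ++ x :: l2) :
    (l1 = [] ∧ x = a ∧ l2 = L) ∨ (∃ l1', l1 = a :: l1' ∧ L = l1' ++ x :: l2) := by
  cases l1 with
  | nil =>
    simp only [List.nil_append, List.cons.injEq] at h
    exact Or.inl ⟨rfl, h.1.symm, h.2.symm⟩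
  | cons hd tl =>
    simp only [List.cons_append, List.cons.injEq] at h
    exact Or.inr ⟨tl, by rw [h.1], h.2⟩

private lemma gadget (G : SimpleGraph V) (P : Finset V)
    (hiso : ∀ b ∈ P, ∃ w ∈ P, w ≠ b ∧ ¬ G.Adj b w) :
    ∀ (R : Finset V), R ⊆ P →
    ∃ (L : List V) (pen : V → Finset V),
      L.Nodup ∧ L.toFinset = R ∧
      (∀ x, (pen x).card ≤ 1) ∧
      (∀ x, x ∉ R → pen x = ∅) ∧
      (∀ x, ∀ w ∈ pen x, w ∈ P ∧ w ≠ x ∧ ¬ G.Adj x w) ∧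
      (∀ l1 b l2, L = l1 ++ b :: l2 → pen b ⊆ (P \ R) ∪ l1.toFinset) ∧
      (∀ b ∈ R, ∃ w ∈ P, w ≠ b ∧ ¬ G.Adj b w ∧ (w ∈ pen b ∨ b ∈ pen w)) := by
  intro R
  induction R using Finset.strongInduction with
  | _ R ih =>
    intro hRP
    rcases Finset.eq_empty_or_nonempty R with rfl | ⟨b, hb⟩
    · refine ⟨[], fun _ => ∅, by simp, by simp, by simp, by simp, by simp, ?_, by simp⟩
      intro l1 x l2 hdec
      exact absurd hdec (by simp)
    · obtain ⟨w₀, hw₀P, hw₀ne, hw₀adj⟩ := hiso b (hRP hb)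
      have hbP : b ∈ P := hRP hb
      by_cases hw₀R : w₀ ∈ R
      · -- pair case : emit b then w₀, pen w₀ = {b}
        set R' := (R.erase b).erase w₀ with hR'
        have hss : R' ⊂ R :=
          lt_of_le_of_lt (Finset.erase_subset _ _) (Finset.erase_ssubset hb)
        obtain ⟨L', pen', hnd', htf', hcard', hsupp', hprops', hearlier', hcover'⟩ :=
          ih R' hss (hss.subset.trans hRP)
        have hbR' : b ∉ R' := by
          intro h
          exact (Finset.mem_erase.mp (Finset.mem_of_mem_erase h)).1 rfl
        have hw₀R' : w₀ ∉ R' := fun h => (Finset.mem_erase.mp h).1 rfl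
        have hbL' : b ∉ L' := fun h => hbR' (htf' ▸ List.mem_toFinset.mpr h)
        have hw₀L' : w₀ ∉ L' := fun h => hw₀R' (htf' ▸ List.mem_toFinset.mpr h)
        have hw₀eb : w₀ ∈ R.erase b := Finset.mem_erase.mpr ⟨hw₀ne, hw₀R⟩
        have hins : insert b (insert w₀ R') = R := by
          rw [hR', Finset.insert_erase hw₀eb, Finset.insert_erase hb]
        have hpenb : Function.update pen' w₀ {b} b = ∅ := by
          rw [Function.update_of_ne (fun h => hw₀ne h.symm)]
          exact hsupp' b hbR'
        refine ⟨b :: w₀ :: L', Function.update pen' w₀ {b}, ?_, ?_, ?_, ?_, ?_, ?_, ?_⟩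
        · refine List.nodup_cons.mpr ⟨?_, List.nodup_cons.mpr ⟨hw₀L', hnd'⟩⟩
          simp only [List.mem_cons]
          rintro (h | h)
          · exact hw₀ne h.symm
          · exact hbL' h
        · simp only [List.toFinset_cons, htf']
          exact hins
        · intro x
          by_cases hx : x = w₀
          · subst hx; rw [Function.update_self]; simp
          · rw [Function.update_of_ne hx]; exact hcard' x
        · intro x hx
          have hxw₀ : x ≠ w₀ := fun h => hx (h ▸ hw₀R)
          rw [Function.update_of_ne hxw₀]
          exact hsupp' x (fun h => hx (hss.subset h))
        · intro x w hw
          by_cases hx : x = w₀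
          · subst hx
            rw [Function.update_self, Finset.mem_singleton] at hw
            subst hw
            exact ⟨hbP, fun h => hw₀ne h.symm, fun h => hw₀adj h.symm⟩
          · rw [Function.update_of_ne hx] at hw
            exact hprops' x w hw
        · intro l1 x l2 hdec
          rcases cons_decomp hdec with ⟨hl1, hxb, hl2⟩ | ⟨l1', hl1, hrest⟩
          · subst hxb
            rw [hpenb]
            exact Finset.empty_subset _
          · rcases cons_decomp hrest with ⟨hl1', hxw, hl2'⟩ | ⟨l1'', hl1', hrest'⟩
            · subst hxw
              rw [Function.update_self, hl1, hl1']
              intro y hy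
              rw [Finset.mem_singleton] at hy
              subst hy
              apply Finset.mem_union_right
              simp
            · have hxL' : x ∈ L' := by rw [hrest']; simp
              have hxw₀ : x ≠ w₀ := fun h => hw₀L' (h ▸ hxL')
              rw [Function.update_of_ne hxw₀]
              have := hearlier' l1'' x l2 hrest'
              intro y hy
              rcases Finset.mem_union.mp (this hy) with hy' | hy'
              · rcases Finset.mem_sdiff.mp hy' with ⟨hyP, hyR'⟩
                by_cases hyR : y ∈ R
                · -- y ∈ R \ R' = {b, w₀} ⊆ l1
                  have : y = b ∨ y = w₀ := by
                    by_contra hcon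
                    push_neg at hcon
                    exact hyR' (Finset.mem_erase.mpr ⟨hcon.2, Finset.mem_erase.mpr ⟨hcon.1, hyR⟩⟩)
                  apply Finset.mem_union_right
                  rw [hl1, hl1']
                  rcases this with rfl | rfl <;> simp
                · exact Finset.mem_union_left _ (Finset.mem_sdiff.mpr ⟨hyP, hyR⟩)
              · apply Finset.mem_union_right
                rw [hl1, hl1']
                simp only [List.toFinset_cons, Finset.mem_insert]
                right; right; exact hy'
        · intro x hx
          by_cases hxb : x = b
          · subst hxb
            refine ⟨w₀, hw₀P, hw₀ne, hw₀adj, Or.inr ?_⟩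
            rw [Function.update_self]
            exact Finset.mem_singleton_self x
          · by_cases hxw₀ : x = w₀
            · subst hxw₀
              refine ⟨b, hbP, fun h => hw₀ne h.symm, fun h => hw₀adj h.symm, Or.inl ?_⟩
              rw [Function.update_self]
              exact Finset.mem_singleton_self b
            · have hxR' : x ∈ R' :=
                Finset.mem_erase.mpr ⟨hxw₀, Finset.mem_erase.mpr ⟨hxb, hx⟩⟩
              obtain ⟨w, hwP, hwne, hwadj, hdisj⟩ := hcover' x hxR'
              refine ⟨w, hwP, hwne, hwadj, ?_⟩
              rcases hdisj with h | h
              · exact Or.inl (by rw [Function.update_of_ne hxw₀]; exact h)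
              · have hwR' : w ∈ R' := by
                  by_contra hcon
                  rw [hsupp' w hcon] at h
                  exact absurd h (Finset.notMem_empty x)
                have hww₀ : w ≠ w₀ := fun hc => hw₀R' (hc ▸ hwR')
                exact Or.inr (by rw [Function.update_of_ne hww₀]; exact h)
      · -- single case : emit b with pen b = {w₀}, w₀ already placed (outside R)
        set R' := R.erase b with hR'
        have hss : R' ⊂ R := Finset.erase_ssubset hb
        obtain ⟨L', pen', hnd', htf', hcard', hsupp', hprops', hearlier', hcover'⟩ :=
          ih R' hss (hss.subset.trans hRP)
        have hbR' : b ∉ R' := fun h => (Finset.mem_erase.mp h).1 rfl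
        have hbL' : b ∉ L' := fun h => hbR' (htf' ▸ List.mem_toFinset.mpr h)
        have hins : insert b R' = R := Finset.insert_erase hb
        refine ⟨b :: L', Function.update pen' b {w₀}, ?_, ?_, ?_, ?_, ?_, ?_, ?_⟩
        · exact List.nodup_cons.mpr ⟨hbL', hnd'⟩
        · simp only [List.toFinset_cons, htf']
          exact hins
        · intro x
          by_cases hx : x = b
          · subst hx; rw [Function.update_self]; simp
          · rw [Function.update_of_ne hx]; exact hcard' x
        · intro x hx
          have hxb : x ≠ b := fun h => hx (h ▸ hb)
          rw [Function.update_of_ne hxb]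
          exact hsupp' x (fun h => hx (hss.subset h))
        · intro x w hw
          by_cases hx : x = b
          · subst hx
            rw [Function.update_self, Finset.mem_singleton] at hw
            subst hw
            exact ⟨hw₀P, hw₀ne, hw₀adj⟩
          · rw [Function.update_of_ne hx] at hw
            exact hprops' x w hw
        · intro l1 x l2 hdec
          rcases cons_decomp hdec with ⟨hl1, hxb, hl2⟩ | ⟨l1', hl1, hrest⟩
          · subst hxb
            rw [Function.update_self]
            intro y hy
            rw [Finset.mem_singleton] at hy
            subst hy
            exact Finset.mem_union_left _ (Finset.mem_sdiff.mpr ⟨hw₀P, hw₀R⟩)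
          · have hxL' : x ∈ L' := by rw [hrest]; simp
            have hxb : x ≠ b := fun h => hbL' (h ▸ hxL')
            rw [Function.update_of_ne hxb]
            have := hearlier' l1' x l2 hrest
            intro y hy
            rcases Finset.mem_union.mp (this hy) with hy' | hy'
            · rcases Finset.mem_sdiff.mp hy' with ⟨hyP, hyR'⟩
              by_cases hyR : y ∈ R
              · have : y = b := by
                  by_contra hcon
                  exact hyR' (Finset.mem_erase.mpr ⟨hcon, hyR⟩)
                apply Finset.mem_union_right
                rw [hl1]
                rcases this with rfl
                simp
              · exact Finset.mem_union_left _ (Finset.mem_sdiff.mpr ⟨hyP, hyR⟩)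
            · apply Finset.mem_union_right
              rw [hl1]
              simp only [List.toFinset_cons, Finset.mem_insert]
              right; exact hy'
        · intro x hx
          by_cases hxb : x = b
          · subst hxb
            refine ⟨w₀, hw₀P, hw₀ne, hw₀adj, Or.inl ?_⟩
            rw [Function.update_self]
            exact Finset.mem_singleton_self w₀
          · have hxR' : x ∈ R' := Finset.mem_erase.mpr ⟨hxb, hx⟩
            obtain ⟨w, hwP, hwne, hwadj, hdisj⟩ := hcover' x hxR'
            refine ⟨w, hwP, hwne, hwadj, ?_⟩
            rcases hdisj with h | h
            · exact Or.inl (by rw [Function.update_of_ne hxb]; exact h)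
            · have hwR' : w ∈ R' := by
                by_contra hcon
                rw [hsupp' w hcon] at h
                exact absurd h (Finset.notMem_empty x)
              have hwb : w ≠ b := fun hc => hbR' (hc ▸ hwR')
              exact Or.inr (by rw [Function.update_of_ne hwb]; exact h)

private lemma append_decomp {LP LR l1 l2 : List V} {x : V} (h : LP ++ LR = l1 ++ x :: l2) :
    (∃ l2', LP = l1 ++ x :: l2') ∨ (∃ l1', l1 = LP ++ l1' ∧ LR = l1' ++ x :: l2) := by
  rcases List.append_eq_append_iff.mp h with ⟨a', ha1, ha2⟩ | ⟨c', hc1, hc2⟩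
  · exact Or.inr ⟨a', ha1, ha2⟩
  · cases c' with
    | nil =>
      simp only [List.append_nil] at hc1
      refine Or.inr ⟨[], by simp [hc1], by simpa using hc2.symm⟩
    | cons hd tl =>
      simp only [List.cons_append, List.cons.injEq] at hc2
      exact Or.inl ⟨tl, by rw [hc1, hc2.1]⟩

private lemma strict_lemma (G : SimpleGraph V) [Nonempty V] (hc : G.Connected) (hne : G ≠ ⊤)
    (m : ℕ) (hn : Fintype.card V = G.cliqueNum * m) :
    ∃ WW : Finset V,
      (∀ u ∈ WW, ∀ v ∈ WW, G.Adj u v → ∃ w, w ∉ WW ∧ Xor' (G.Adj w u) (G.Adj w v)) ∧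
      m + 1 ≤ WW.card := by
  set ω := G.cliqueNum with hω
  set Nc : V → Finset V := fun x => Finset.univ.filter (fun y => x = y ∨ G.Adj x y) with hNc
  have memNc : ∀ x y : V, y ∈ Nc x ↔ (x = y ∨ G.Adj x y) := by
    intro x y; simp [hNc]
  have memNc_self : ∀ x : V, x ∈ Nc x := fun x => (memNc x x).mpr (Or.inl rfl)
  obtain ⟨v₀, -, hmax⟩ := Finset.exists_max_image Finset.univ (fun x => (Nc x).card)
    Finset.univ_nonempty
  have hdom : ∀ b : V, Nc v₀ ⊆ Nc b → Nc b = Nc v₀ := by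
    intro b hsub
    exact (Finset.eq_of_subset_of_card_le hsub (hmax b (Finset.mem_univ b))).symm
  set T : Finset V := Finset.univ.filter (fun x => Nc x = Nc v₀) with hT
  have memT : ∀ x : V, x ∈ T ↔ Nc x = Nc v₀ := by intro x; simp [hT]
  have hv₀T : v₀ ∈ T := (memT v₀).mpr rfl
  have hTadj : ∀ x ∈ T, ∀ y, y ∈ Nc v₀ → x ≠ y → G.Adj x y := by
    intro x hx y hy hxy
    have : y ∈ Nc x := ((memT x).mp hx).symm ▸ hy
    rcases (memNc x y).mp this with h | h
    · exact absurd h hxy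
    · exact h
  have hTclique : G.IsClique (T : Set V) := by
    intro x hx y hy hxy
    apply hTadj x (Finset.mem_coe.mp hx)
    · have hyT := Finset.mem_coe.mp hy
      exact ((memT y).mp hyT) ▸ memNc_self y
    · exact hxy
  -- T.card < ω
  have hTcard : T.card < ω := by
    -- find s ∉ T
    have hsT : ∃ s, s ∉ T := by
      by_contra hx
      push_neg at hx
      apply hne
      apply top_le_iff.mp
      intro a b hab
      have hbT := hx b
      have : b ∈ Nc a := ((memT a).mp (hx a)).symm ▸ (((memT b).mp hbT) ▸ memNc_self b)
      rcases (memNc a b).mp this with h | h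
      · exact absurd h hab
      · exact h
    obtain ⟨s, hs⟩ := hsT
    have cross : ∀ (a bb : V) (w : G.Walk a bb), a ∈ T → bb ∉ T →
        ∃ x ∈ T, ∃ y, y ∉ T ∧ G.Adj x y := by
      intro a bb w
      induction w with
      | nil => intro ha hbb; exact absurd ha hbb
      | @cons u v bb h p ih =>
        intro ha hbb
        by_cases hv : v ∈ T
        · exact ih hv hbb
        · exact ⟨u, ha, v, hv, h⟩
    obtain ⟨x, hx, y, hy, hxy⟩ := (hc.preconnected v₀ s).elim (fun w => cross v₀ s w hv₀T hs)
    -- y is adjacent to all of T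
    have hyNc : y ∈ Nc v₀ := by
      have : y ∈ Nc x := (memNc x y).mpr (Or.inr hxy)
      exact ((memT x).mp hx) ▸ this
    have hyadjT : ∀ b ∈ T, G.Adj y b := by
      intro b hb
      have hby : b ≠ y := fun h => hy (h ▸ hb)
      exact (hTadj b hb y hyNc hby).symm
    have hclq : G.IsClique ((insert y T : Finset V) : Set V) := by
      rw [Finset.coe_insert]
      apply hTclique.insert
      intro b hb hne'
      exact hyadjT b (Finset.mem_coe.mp hb)
    have hcard := @SimpleGraph.IsClique.card_le_cliqueNum _ G _ _ hclq
    rw [Finset.card_insert_of_notMem hy] at hcard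
    omega
  set U : Finset V := Finset.univ \ T with hU
  have hv₀U : v₀ ∉ U := fun h => (Finset.mem_sdiff.mp h).2 hv₀T
  have hUcard : U.card = Fintype.card V - T.card := by
    rw [hU, Finset.card_sdiff_of_subset (Finset.subset_univ T), Finset.card_univ]
  set P : Finset V := U.filter (fun y => G.Adj v₀ y) with hP
  have hPU : P ⊆ U := Finset.filter_subset _ _
  have hv₀P : v₀ ∉ P := fun h => hv₀U (hPU h)
  have memP : ∀ y, y ∈ P ↔ (y ∈ U ∧ G.Adj v₀ y) := by intro y; simp [hP]
  -- every vertex of P has a nonneighbour in P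
  have hiso : ∀ b ∈ P, ∃ w ∈ P, w ≠ b ∧ ¬ G.Adj b w := by
    intro b hb
    by_contra hx
    push_neg at hx
    have hadjall : ∀ w ∈ P, w ≠ b → G.Adj b w := fun w hw hwb => hx w hw hwb
    have hbU : b ∈ U := hPU hb
    have hadjv₀b : G.Adj v₀ b := ((memP b).mp hb).2
    have hsub : Nc v₀ ⊆ Nc b := by
      intro z hz
      rcases (memNc v₀ z).mp hz with h | h
      · exact (memNc b z).mpr (Or.inr (by rw [← h]; exact hadjv₀b.symm))
      · by_cases hzb : z = b
        · exact (memNc b z).mpr (Or.inl hzb.symm)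
        · by_cases hzT : z ∈ T
          · have hbNcz : b ∈ Nc z := ((memT z).mp hzT).symm ▸ ((memNc v₀ b).mpr (Or.inr hadjv₀b))
            rcases (memNc z b).mp hbNcz with h' | h'
            · exact absurd h' hzb
            · exact (memNc b z).mpr (Or.inr h'.symm)
          · have hzP : z ∈ P := (memP z).mpr ⟨Finset.mem_sdiff.mpr ⟨Finset.mem_univ z, hzT⟩, h⟩
            exact (memNc b z).mpr (Or.inr (hadjall z hzP hzb))
    have : b ∈ T := (memT b).mpr (hdom b hsub)
    exact (Finset.mem_sdiff.mp hbU).2 this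
  -- gadget list for P
  obtain ⟨LP, pen, hndP, htfP, hpcard, hpsupp, hpprops, hpearlier, hpcover⟩ :=
    gadget G P hiso P (le_refl P)
  set LR := (U \ P).toList with hLR
  have htfR : LR.toFinset = U \ P := by rw [hLR, Finset.toList_toFinset]
  have hndR : LR.Nodup := Finset.nodup_toList _
  set L := LP ++ LR with hLdef
  have hndL : L.Nodup := by
    rw [hLdef, List.nodup_append]
    refine ⟨hndP, hndR, ?_⟩
    intro x hxP y hxR hxy
    subst hxy
    have h1 : x ∈ P := htfP ▸ List.mem_toFinset.mpr hxP
    have h2 : x ∈ U \ P := htfR ▸ List.mem_toFinset.mpr hxR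
    exact (Finset.mem_sdiff.mp h2).2 h1
  have hLmem : ∀ x, x ∈ L ↔ x ∈ U := by
    intro x
    rw [hLdef, List.mem_append]
    constructor
    · rintro (h | h)
      · exact hPU (htfP ▸ List.mem_toFinset.mpr h)
      · exact (Finset.mem_sdiff.mp (htfR ▸ List.mem_toFinset.mpr h)).1
    · intro h
      by_cases hxP : x ∈ P
      · exact Or.inl (List.mem_toFinset.mp (htfP ▸ hxP))
      · exact Or.inr (List.mem_toFinset.mp (htfR ▸ (Finset.mem_sdiff.mpr ⟨h, hxP⟩)))
  have hl1P : ∀ (l1 l2' : List V), LP = l1 ++ l2' → ∀ y ∈ l1, y ∈ P := by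
    intro l1 l2' hdec y hy
    have hyLP : y ∈ LP := by rw [hdec]; exact List.mem_append_left _ hy
    exact htfP ▸ List.mem_toFinset.mpr hyLP
  have hnotP : ∀ (l1' l2 : List V) (b : V), LR = l1' ++ b :: l2 → b ∉ P := by
    intro l1' l2 b hdec
    have hbLR : b ∈ LR := by rw [hdec]; simp
    exact (Finset.mem_sdiff.mp (htfR ▸ List.mem_toFinset.mpr hbLR)).2
  have hpenL : ∀ l1 b l2, L = l1 ++ b :: l2 → pen b ⊆ l1.toFinset := by
    intro l1 b l2 hdec
    rw [hLdef] at hdec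
    rcases append_decomp hdec with ⟨l2', hLPdec⟩ | ⟨l1', hl1, hLRdec⟩
    · have := hpearlier l1 b l2' hLPdec
      simpa using this
    · rw [hpsupp b (hnotP l1' l2 b hLRdec)]
      exact Finset.empty_subset _
  have hcliqueL : ∀ l1 b l2, L = l1 ++ b :: l2 → ∀ D : Finset V,
      D ⊆ l1.toFinset → (∀ u ∈ D, G.Adj u b) → G.IsClique (D : Set V) →
      D.card + (pen b).card < ω := by
    intro l1 b l2 hdec D hD hDadj hDcl
    have hbD : b ∉ D := fun h => nodup_not_mem_left hndL hdec (List.mem_toFinset.mp (hD h))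
    rw [hLdef] at hdec
    rcases append_decomp hdec with ⟨l2', hLPdec⟩ | ⟨l1', hl1, hLRdec⟩
    · -- b and D are in P : use the clique together with v₀
      have hDP : ∀ y ∈ D, y ∈ P := by
        intro y hy
        exact hl1P l1 (b :: l2') hLPdec y (List.mem_toFinset.mp (hD hy))
      have hbP : b ∈ P := by
        have : b ∈ LP := by rw [hLPdec]; simp
        exact htfP ▸ List.mem_toFinset.mpr this
      have hv₀notbD : v₀ ∉ insert b D := by
        intro h
        rcases Finset.mem_insert.mp h with h | h
        · exact hv₀P (h ▸ hbP)
        · exact hv₀P (hDP v₀ h)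
      have hclq1 : G.IsClique ((insert b D : Finset V) : Set V) := by
        rw [Finset.coe_insert]
        exact hDcl.insert (fun u hu _ => (hDadj u (Finset.mem_coe.mp hu)).symm)
      have hclq2 : G.IsClique ((insert v₀ (insert b D) : Finset V) : Set V) := by
        rw [Finset.coe_insert]
        apply hclq1.insert
        intro z hz hne'
        have hzP : z ∈ P := by
          rcases Finset.mem_insert.mp (Finset.mem_coe.mp hz) with h | h
          · exact h ▸ hbP
          · exact hDP z h
        exact ((memP z).mp hzP).2
      have hcard := @SimpleGraph.IsClique.card_le_cliqueNum _ G _ _ hclq2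
      rw [Finset.card_insert_of_notMem hv₀notbD, Finset.card_insert_of_notMem hbD] at hcard
      have := hpcard b
      omega
    · -- b outside P : pen b is empty
      rw [hpsupp b (hnotP l1' l2 b hLRdec)]
      have hclq1 : G.IsClique ((insert b D : Finset V) : Set V) := by
        rw [Finset.coe_insert]
        exact hDcl.insert (fun u hu _ => (hDadj u (Finset.mem_coe.mp hu)).symm)
      have hcard := @SimpleGraph.IsClique.card_le_cliqueNum _ G _ _ hclq1
      rw [Finset.card_insert_of_notMem hbD] at hcard
      simp only [Finset.card_empty]
      omega
  obtain ⟨c, hc1, hc2, hc3⟩ := greedy_exists G ω pen L hndL hpenL hcliqueL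
  have hT1 : 1 ≤ T.card := Finset.card_pos.mpr ⟨v₀, hv₀T⟩
  have hω1 : 1 ≤ ω := by omega
  obtain ⟨j, hj⟩ := max_class U ω hω1 c (fun b hb => hc1 b ((hLmem b).mpr hb))
  set W0 := U.filter (fun x => c x = j) with hW0
  have hW0U : W0 ⊆ U := Finset.filter_subset _ _
  have hv₀W0 : v₀ ∉ W0 := fun h => hv₀U (hW0U h)
  have hTn : T.card ≤ Fintype.card V := by
    have := Finset.card_le_card (Finset.subset_univ T)
    rwa [Finset.card_univ] at this
  have hmcc : m ≤ W0.card := by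
    by_contra hcon
    push_neg at hcon
    have h1 : W0.card + 1 ≤ m := hcon
    have h2 : ω * (W0.card + 1) ≤ ω * m := Nat.mul_le_mul_left ω h1
    have h3 : ω * (W0.card + 1) = ω * W0.card + ω := by ring
    have h4 : U.card + T.card = Fintype.card V := by omega
    omega
  refine ⟨insert v₀ W0, ?_, ?_⟩
  swap
  · rw [Finset.card_insert_of_notMem hv₀W0]
    omega
  intro u hu v hv hadj
  rcases Finset.mem_insert.mp hu with rfl | huW <;> rcases Finset.mem_insert.mp hv with rfl | hvW
  · exact absurd hadj (G.irrefl)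
  · -- u = v₀, v ∈ W0
    have hvU : v ∈ U := hW0U hvW
    have hvj : c v = j := (Finset.mem_filter.mp hvW).2
    have hvP : v ∈ P := (memP v).mpr ⟨hvU, hadj⟩
    obtain ⟨w, hwP, hwne, hwnadj, hdisj⟩ := hpcover v hvP
    have hwU : w ∈ U := hPU hwP
    have hwj : c w ≠ j := by
      rcases hdisj with h | h
      · have := hc2 v ((hLmem v).mpr hvU) w h
        rw [hvj] at this
        exact fun hh => this hh.symm
      · have := hc2 w ((hLmem w).mpr hwU) v h
        rw [hvj] at this
        exact this
    refine ⟨w, ?_, ?_⟩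
    · intro h
      rcases Finset.mem_insert.mp h with h | h
      · exact hv₀U (h ▸ hwU)
      · exact hwj (Finset.mem_filter.mp h).2
    · exact Or.inl ⟨((memP w).mp hwP).2.symm, fun h => hwnadj h.symm⟩
  · -- u ∈ W0, v = v₀
    have huU : u ∈ U := hW0U huW
    have huj : c u = j := (Finset.mem_filter.mp huW).2
    have huP : u ∈ P := (memP u).mpr ⟨huU, hadj.symm⟩
    obtain ⟨w, hwP, hwne, hwnadj, hdisj⟩ := hpcover u huP
    have hwU : w ∈ U := hPU hwP
    have hwj : c w ≠ j := by
      rcases hdisj with h | h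
      · have := hc2 u ((hLmem u).mpr huU) w h
        rw [huj] at this
        exact fun hh => this hh.symm
      · have := hc2 w ((hLmem w).mpr hwU) u h
        rw [huj] at this
        exact this
    refine ⟨w, ?_, ?_⟩
    · intro h
      rcases Finset.mem_insert.mp h with h | h
      · exact hv₀U (h ▸ hwU)
      · exact hwj (Finset.mem_filter.mp h).2
    · exact Or.inr ⟨((memP w).mp hwP).2.symm, fun h => hwnadj h.symm⟩
  · -- both in W0
    have huU : u ∈ U := hW0U huW
    have hvU : v ∈ U := hW0U hvW
    have huj : c u = j := (Finset.mem_filter.mp huW).2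
    have hvj : c v = j := (Finset.mem_filter.mp hvW).2
    obtain ⟨w, hwL, hwc, hwx⟩ := hc3 u ((hLmem u).mpr huU) v ((hLmem v).mpr hvU) hadj
      (by rw [huj, hvj])
    have hwU : w ∈ U := (hLmem w).mp hwL
    refine ⟨w, ?_, hwx⟩
    intro h
    rcases Finset.mem_insert.mp h with h | h
    · exact hv₀U (h ▸ hwU)
    · exact hwc (by rw [(Finset.mem_filter.mp h).2, huj])

theorem dimL_le_ratio (G : SimpleGraph V) (hc : G.Connected) :
    (dimL G : ℚ) ≤ (((G.cliqueNum : ℚ) - 1) / (G.cliqueNum : ℚ)) * (Fintype.card V : ℚ) ∧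
      ((dimL G : ℚ) = (((G.cliqueNum : ℚ) - 1) / (G.cliqueNum : ℚ)) * (Fintype.card V : ℚ) ↔
        G = ⊤) := by
  have hNE : Nonempty V := hc.nonempty
  have hn1 : 1 ≤ Fintype.card V := Fintype.card_pos
  have hω1 : 1 ≤ G.cliqueNum := by
    obtain ⟨v⟩ := hNE
    have hclv : G.IsClique ({v} : Finset V) := by
      simp [SimpleGraph.isClique_iff, Set.pairwise_singleton]
    have := @SimpleGraph.IsClique.card_le_cliqueNum _ G _ _ hclv
    simpa using this
  have hωn : G.cliqueNum ≤ Fintype.card V := by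
    obtain ⟨s, hs⟩ := G.exists_isNClique_cliqueNum
    rw [← hs.card_eq]
    exact Finset.card_le_univ s
  have hωQ : (G.cliqueNum : ℚ) ≠ 0 := by
    simp only [ne_eq, Nat.cast_eq_zero]
    omega
  have hωQpos : (0 : ℚ) < (G.cliqueNum : ℚ) := by
    have : (0:ℚ) < 1 := one_pos
    calc (0:ℚ) < 1 := one_pos
      _ ≤ (G.cliqueNum : ℚ) := by exact_mod_cast hω1
  have hratio : ((G.cliqueNum : ℚ) - 1) / (G.cliqueNum : ℚ) * (Fintype.card V : ℚ) =
      (Fintype.card V : ℚ) - (Fintype.card V : ℚ) / (G.cliqueNum : ℚ) := by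
    field_simp
  obtain ⟨cc, hccn, hnωcc, hdim⟩ := exists_class G
  have hkey : (dimL G : ℚ) ≤ (Fintype.card V : ℚ) - (cc : ℚ) := by
    calc (dimL G : ℚ) ≤ ((Fintype.card V - cc : ℕ) : ℚ) := Nat.cast_le.mpr hdim
      _ = (Fintype.card V : ℚ) - (cc : ℚ) := by rw [Nat.cast_sub hccn]
  have hccQ : (Fintype.card V : ℚ) / (G.cliqueNum : ℚ) ≤ (cc : ℚ) := by
    rw [div_le_iff₀ hωQpos]
    have : (Fintype.card V : ℚ) ≤ ((G.cliqueNum * cc : ℕ) : ℚ) := Nat.cast_le.mpr hnωcc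
    push_cast at this
    linarith
  have hineq : (dimL G : ℚ) ≤
      ((G.cliqueNum : ℚ) - 1) / (G.cliqueNum : ℚ) * (Fintype.card V : ℚ) := by
    rw [hratio]
    linarith
  refine ⟨hineq, ?_, ?_⟩
  · intro heq
    by_contra hne
    -- from equality, cc = n / ω exactly
    have h1 : (Fintype.card V : ℚ) - (Fintype.card V : ℚ) / (G.cliqueNum : ℚ) ≤
        (Fintype.card V : ℚ) - (cc : ℚ) := by
      rw [← hratio, ← heq]
      exact hkey
    have hcceq : (cc : ℚ) = (Fintype.card V : ℚ) / (G.cliqueNum : ℚ) := by linarith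
    have hnn : Fintype.card V = G.cliqueNum * cc := by
      have : (Fintype.card V : ℚ) = ((G.cliqueNum * cc : ℕ) : ℚ) := by
        push_cast
        rw [hcceq]
        field_simp
      exact_mod_cast this
    -- dimL G = n - cc
    have hdimn : dimL G = Fintype.card V - cc := by
      have : (dimL G : ℚ) = ((Fintype.card V - cc : ℕ) : ℚ) := by
        rw [Nat.cast_sub hccn, heq, hratio, hcceq]
      exact_mod_cast this
    -- ω ≥ 2
    have hω2 : 2 ≤ G.cliqueNum := by
      by_contra hcon
      push_neg at hcon
      have hωeq1 : G.cliqueNum = 1 := by omega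
      -- no edges, connected ⇒ subsingleton ⇒ G = ⊤
      have hnoedge : ∀ a b : V, ¬ G.Adj a b := by
        intro a b hab
        have hcl : G.IsClique ({a, b} : Finset V) := by
          rw [Finset.coe_insert, Finset.coe_singleton]
          exact isClique_pair.mpr (fun _ => hab)
        have := @SimpleGraph.IsClique.card_le_cliqueNum _ G _ _ hcl
        rw [Finset.card_pair hab.ne, hωeq1] at this
        omega
      have hsub : ∀ a b : V, a = b := by
        intro a b
        refine (hc.preconnected a b).elim (fun w => ?_)
        match w with
        | SimpleGraph.Walk.nil => rfl
        | SimpleGraph.Walk.cons h _ => exact absurd h (hnoedge _ _)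
      apply hne
      apply top_le_iff.mp
      intro a b hab
      exact absurd (hsub a b) hab
    have hcc1 : 1 ≤ cc := by
      by_contra hcon
      push_neg at hcon
      have : cc = 0 := by omega
      rw [this, Nat.mul_zero] at hnn
      omega
    have hccn' : cc < Fintype.card V := by
      have h2 : 2 * cc ≤ G.cliqueNum * cc := Nat.mul_le_mul_right cc hω2
      omega
    obtain ⟨WW, hWW, hWWcard⟩ := strict_lemma G hc hne cc hnn
    have hd2 : dimL G ≤ Fintype.card V - WW.card := dimL_le_of_good G WW hWW
    have hd3 : Fintype.card V - WW.card ≤ Fintype.card V - (cc + 1) :=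
      Nat.sub_le_sub_left hWWcard _
    omega
  · intro h
    subst h
    rw [cliqueNum_top, dimL_top, Nat.cast_sub hn1]
    have hnQ : (Fintype.card V : ℚ) ≠ 0 := by
      simp only [ne_eq, Nat.cast_eq_zero]
      omega
    field_simp
    simp
end

section
/- A finite simple connected graph G with n(G) ≥ 2 satisfies dim_l(G) = n(G) − 2 if and only if ω(G) = n(G) − 1. -/
open SimpleGraph

variable {V : Type*} [Fintype V] [DecidableEq V]

namespace LMDaux
set_option linter.unusedSectionVars false

/-- adjacent pair `u v` whose neighborhoods agree outside `{u,v,w}`. -/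
def Bd (G : SimpleGraph V) (u v w : V) : Prop :=
  G.Adj u v ∧ ∀ z, z ≠ u → z ≠ v → z ≠ w → (G.Adj z u ↔ G.Adj z v)

/-- closed twins. -/
def Tw (G : SimpleGraph V) (u v : V) : Prop :=
  G.Adj u v ∧ ∀ z, z ≠ u → z ≠ v → (G.Adj z u ↔ G.Adj z v)

lemma bd_symm {G : SimpleGraph V} {u v w : V} (h : Bd G u v w) : Bd G v u w :=
  ⟨h.1.symm, fun z h1 h2 h3 => (h.2 z h2 h1 h3).symm⟩

lemma univ_resolving (G : SimpleGraph V) : IsLocalResolving G (Finset.univ : Finset V) :=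
  fun u _ _ hu _ => absurd (Finset.mem_univ u) hu

lemma dimL_exists (G : SimpleGraph V) :
    ∃ S : Finset V, S.card = dimL G ∧ IsLocalResolving G S :=
  Nat.sInf_mem (⟨Fintype.card V, Finset.univ, by simp, univ_resolving G⟩ :
    Set.Nonempty {k | ∃ S : Finset V, S.card = k ∧ IsLocalResolving G S})

lemma dimL_le {G : SimpleGraph V} {S : Finset V} (h : IsLocalResolving G S) :
    dimL G ≤ S.card :=
  Nat.sInf_le ⟨S, rfl, h⟩

lemma adj_iff_of_dist_eq {G : SimpleGraph V} {p q z : V} (h : G.dist p z = G.dist q z) :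
    (G.Adj z p ↔ G.Adj z q) := by
  rw [← SimpleGraph.dist_eq_one_iff_adj, ← SimpleGraph.dist_eq_one_iff_adj,
    SimpleGraph.dist_comm (u := z) (v := p), SimpleGraph.dist_comm (u := z) (v := q), h]

lemma exists_boundary {G : SimpleGraph V} (P : V → Prop) :
    ∀ {u v : V}, G.Walk u v → P u → ¬ P v → ∃ p q, G.Adj p q ∧ P p ∧ ¬ P q := by
  intro u v w
  induction w with
  | nil => intro hu hv; exact absurd hu hv
  | @cons u' b v' h w ih =>
    intro hu hv
    by_cases hb : P b
    · exact ih hb hv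
    · exact ⟨u', b, h, hu, hb⟩


/-- `z` is on the `a`-side: adjacent to `a` with neighborhoods agreeing off `c`. -/
def SA (G : SimpleGraph V) (a c z : V) : Prop := z ≠ c ∧ Bd G a z c

lemma sa_adj {G : SimpleGraph V} {a c z : V} (h : SA G a c z) : G.Adj a z := h.2.1

lemma sa_clique {G : SimpleGraph V} {a c x y : V} (h1 : SA G a c x) (h2 : SA G a c y)
    (hne : x ≠ y) : G.Adj x y :=
  ((h1.2.2 y (sa_adj h2).ne' hne.symm h2.1).mp (sa_adj h2).symm).symm

section Main

variable {G : SimpleGraph V} {a c x y : V}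

lemma cover (hac : a ≠ c) (hnadj : ¬ G.Adj a c)
    (H : ∀ u v w : V, u ≠ v → u ≠ w → v ≠ w → (Bd G u v w ∨ Bd G u w v ∨ Bd G v w u))
    (z : V) (hza : z ≠ a) (hzc : z ≠ c) : SA G a c z ∨ SA G c a z := by
  rcases H a c z hac hza.symm hzc.symm with h | h | h
  · exact absurd h.1 hnadj
  · exact Or.inl ⟨hzc, h⟩
  · exact Or.inr ⟨hza, h⟩

lemma bd_block (hy : SA G c a y) (hca : c ≠ a) (hcx : c ≠ x) (hnadj' : ¬ G.Adj c a)
    (h : Bd G y a x) : False :=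
  hnadj' ((h.2 c (sa_adj hy).ne hca hcx).mp (sa_adj hy))

lemma tw_merge (hx : SA G a c x) (hya : y ≠ a) (hyx : y ≠ x) (hyc : y ≠ c)
    (h : Bd G x a y) : Tw G x a :=
  ⟨h.1, fun z hzx hza => by
    by_cases hzy : z = y
    · rw [hzy]; exact (hx.2.2 _ hya hyx hyc).symm
    · exact h.2 z hzx hza hzy⟩

lemma no_both (hy : SA G c a y) (hy' : ¬ SA G a c y) (htwy : Tw G y c)
    (hya : ¬ G.Adj y a) (z : V) (hzA : SA G a c z) (hzC : SA G c a z) : False := by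
  by_cases hzy : z = y
  · exact hy' (hzy ▸ hzA)
  · have h1 := hzA.2.2 y hy.1 (Ne.symm hzy) (sa_adj hy).ne'
    have h2 := hzC.2.2 y (sa_adj hy).ne' (Ne.symm hzy) hy.1
    exact hya (h1.mpr (h2.mp htwy.1))

lemma all_tw (H : ∀ u v w : V, u ≠ v → u ≠ w → v ≠ w → (Bd G u v w ∨ Bd G u w v ∨ Bd G v w u))
    (hy : SA G c a y) (hy' : ¬ SA G a c y) (htwy : Tw G y c) (hya : ¬ G.Adj y a) :
    ∀ z, SA G a c z → Tw G z a := by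
  intro z hz
  have hzy : z ≠ y := fun h => hy' (h ▸ hz)
  have hza : z ≠ a := (sa_adj hz).ne'
  rcases H y a z hy.1 (Ne.symm hzy) (Ne.symm hza) with h | h | h
  · exact absurd h.1 hya
  · exfalso
    have hadjyz : G.Adj y z := h.1
    have hcz : G.Adj c z := ((htwy.2 z hzy hz.1).mp hadjyz.symm).symm
    refine no_both hy hy' htwy hya z hz ⟨hza, hcz, ?_⟩
    intro w hwc hwz hwa
    by_cases hwy : w = y
    · rw [hwy]; exact iff_of_true htwy.1 hadjyz
    · exact (htwy.2 w hwy hwc).symm.trans (h.2 w hwy hwz hwa)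
  · refine ⟨(sa_adj hz).symm, fun w hwz hwa => ?_⟩
    by_cases hwy : w = y
    · rw [hwy]; exact (hz.2.2 _ hy.1 (Ne.symm hzy) (sa_adj hy).ne').symm
    · exact (h.2 w hwa hwz hwy).symm

lemma cross (hc : G.Connected) (hac : a ≠ c) (hnadj : ¬ G.Adj a c)
    (H : ∀ u v w : V, u ≠ v → u ≠ w → v ≠ w → (Bd G u v w ∨ Bd G u w v ∨ Bd G v w u))
    (hx : SA G a c x) (hx' : ¬ SA G c a x) (hy : SA G c a y) (hy' : ¬ SA G a c y) :
    G.Adj x y := by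
  by_contra hadj
  have hax : G.Adj a x := sa_adj hx
  have hcy : G.Adj c y := sa_adj hy
  have hxy : x ≠ y := fun h => hy' (h ▸ hx)
  have hxa : x ≠ a := hax.ne'
  have hxc : x ≠ c := hx.1
  have hya : y ≠ a := hy.1
  have hyc : y ≠ c := hcy.ne'
  have hca : c ≠ a := hac.symm
  have hnadj' : ¬ G.Adj c a := fun h => hnadj h.symm
  -- y is a closed twin of c
  have htwy : Tw G y c := by
    rcases H x y c hxy hxc hyc with h | h | h
    · exact absurd h.1 hadj
    · exact absurd h (bd_block hx hac hya.symm hnadj)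
    · exact tw_merge hy hxc hxy hxa h
  have hyadj : ¬ G.Adj y a := fun hh => hnadj ((htwy.2 a hya.symm hac).mp hh.symm)
  have hAtw := all_tw H hy hy' htwy hyadj
  -- x is a closed twin of a
  have htwx : Tw G x a := hAtw x hx
  have hxadj : ¬ G.Adj x c := fun hh => hnadj' ((htwx.2 c hxc.symm hca).mp hh.symm)
  have hCtw := all_tw H hx hx' htwx hxadj
  -- the graph is then disconnected
  obtain ⟨wlk⟩ := hc.preconnected a c
  have hPa : a = a ∨ SA G a c a := Or.inl rfl
  have hPc : ¬ (c = a ∨ SA G a c c) := by rintro (h | h); exacts [hac h.symm, h.1 rfl]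
  obtain ⟨p, q, hpq, hPp, hPq⟩ := exists_boundary (fun z => z = a ∨ SA G a c z) wlk hPa hPc
  have hqa : q ≠ a := fun h => hPq (Or.inl h)
  have hq2 : q = c ∨ SA G c a q := by
    by_cases hqc : q = c
    · exact Or.inl hqc
    · exact Or.inr ((cover hac hnadj H q hqa hqc).resolve_left (fun h => hPq (Or.inr h)))
  rcases hPp with hpa | hAp
  · rcases hq2 with hqc | hCq
    · rw [hpa, hqc] at hpq; exact hnadj hpq
    · rw [hpa] at hpq; exact hnadj (((hCtw q hCq).2 a hqa.symm hac).mp hpq)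
  · have htp := hAtw p hAp
    rcases hq2 with hqc | hCq
    · rw [hqc] at hpq; exact hnadj' ((htp.2 c hpq.ne' hca).mp hpq.symm)
    · have h1 : G.Adj q a := (htp.2 q hpq.ne' hqa).mp hpq.symm
      exact hnadj (((hCtw q hCq).2 a hqa.symm hac).mp h1.symm)

end Main

/-- The main combinatorial lemma: if every triple of distinct vertices contains an
adjacent pair whose neighborhoods agree off the triple, and `G` is connected with a
nonadjacent pair, then some vertex-deleted subgraph is complete. -/
lemma main_comb (G : SimpleGraph V) (hc : G.Connected) (a c : V) (hac : a ≠ c)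
    (hnadj : ¬ G.Adj a c)
    (H : ∀ u v w : V, u ≠ v → u ≠ w → v ≠ w → (Bd G u v w ∨ Bd G u w v ∨ Bd G v w u)) :
    ∃ x : V, ∀ p q : V, p ≠ x → q ≠ x → p ≠ q → G.Adj p q := by
  have hca : c ≠ a := hac.symm
  have hnadj' : ¬ G.Adj c a := fun h => hnadj h.symm
  by_cases h1 : ∀ z, z ≠ a → z ≠ c → SA G a c z
  · refine ⟨c, fun p q hp hq hpq => ?_⟩
    by_cases hpa : p = a
    · rw [hpa] at hpq ⊢; exact sa_adj (h1 q (Ne.symm hpq) hq)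
    · by_cases hqa : q = a
      · rw [hqa]; exact (sa_adj (h1 p hpa hp)).symm
      · exact sa_clique (h1 p hpa hp) (h1 q hqa hq) hpq
  by_cases h2 : ∀ z, z ≠ a → z ≠ c → SA G c a z
  · refine ⟨a, fun p q hp hq hpq => ?_⟩
    by_cases hpc : p = c
    · rw [hpc] at hpq ⊢; exact sa_adj (h2 q hq (Ne.symm hpq))
    · by_cases hqc : q = c
      · rw [hqc]; exact (sa_adj (h2 p hp hpc)).symm
      · exact sa_clique (h2 p hp hpc) (h2 q hq hqc) hpq
  push_neg at h1 h2
  obtain ⟨y, hya, hyc, hy'⟩ := h1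
  obtain ⟨x, hxa, hxc, hx'⟩ := h2
  have hy : SA G c a y := (cover hac hnadj H y hya hyc).resolve_left hy'
  have hx : SA G a c x := (cover hac hnadj H x hxa hxc).resolve_right hx'
  have hcross : G.Adj x y := cross hc hac hnadj H hx hx' hy hy'
  have hD1 : Bd G x y a ∨ Tw G x a := by
    rcases H x y a hcross.ne hxa hya with h | h | h
    · exact Or.inl h
    · exact Or.inr (tw_merge hx hya hcross.ne.symm hyc h)
    · exact absurd h (bd_block hy hca hxc.symm hnadj')
  have hD2 : Bd G x y c ∨ Tw G y c := by
    rcases H x y c hcross.ne hxc hyc with h | h | h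
    · exact Or.inl h
    · exact absurd h (bd_block hx hac hya.symm hnadj)
    · exact Or.inr (tw_merge hy hxc hcross.ne hxa h)
  rcases hD1 with hbd1 | htwx
  · rcases hD2 with hbd2 | htwy
    · -- both pairs agree : the whole graph minus `c` is a clique
      refine ⟨c, ?_⟩
      have htwxy : ∀ z, z ≠ x → z ≠ y → (G.Adj z x ↔ G.Adj z y) := by
        intro z hzx hzy
        by_cases hza : z = a
        · rw [hza]; exact hbd2.2 a hxa.symm hya.symm hac
        · exact hbd1.2 z hzx hzy hza
      have hay : G.Adj a y := (htwxy a hxa.symm hya.symm).mp (sa_adj hx)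
      have hcx : G.Adj c x := (htwxy c hxc.symm hyc.symm).mpr (sa_adj hy)
      have haceq : ∀ z, z ≠ a → z ≠ c → (G.Adj z a ↔ G.Adj z c) := by
        intro z hza hzc
        by_cases hzx : z = x
        · rw [hzx]; exact iff_of_true (sa_adj hx).symm hcx.symm
        · by_cases hzy : z = y
          · rw [hzy]; exact iff_of_true hay.symm (sa_adj hy).symm
          · exact (hx.2.2 z hza hzx hzc).trans
              ((htwxy z hzx hzy).trans (hy.2.2 z hzc hzy hza).symm)
      have hkey : ∀ z, z ≠ a → z ≠ c → G.Adj a z := by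
        intro z hza hzc
        rcases cover hac hnadj H z hza hzc with h | h
        · exact sa_adj h
        · exact ((haceq z hza hzc).mpr (sa_adj h).symm).symm
      intro p q hpc hqc hpq
      by_cases hpa : p = a
      · rw [hpa] at hpq ⊢; exact hkey q (Ne.symm hpq) hqc
      · by_cases hqa : q = a
        · rw [hqa]; exact (hkey p hpa hpc).symm
        · rcases cover hac hnadj H p hpa hpc with hAp | hCp
          · rcases cover hac hnadj H q hqa hqc with hAq | hCq
            · exact sa_clique hAp hAq hpq
            · by_cases hCp' : SA G c a p
              · exact sa_clique hCp' hCq hpq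
              · by_cases hAq' : SA G a c q
                · exact sa_clique hAp hAq' hpq
                · exact cross hc hac hnadj H hAp hCp' hCq hAq'
          · rcases cover hac hnadj H q hqa hqc with hAq | hCq
            · by_cases hAp' : SA G a c p
              · exact sa_clique hAp' hAq hpq
              · by_cases hCq' : SA G c a q
                · exact sa_clique hCp hCq' hpq
                · exact (cross hc hac hnadj H hAq hCq' hCp hAp').symm
            · exact sa_clique hCp hCq hpq
    · -- `x ≡ a` off triple, `y ≡ c` : contradiction with `y ∉ A`
      exfalso
      apply hx'
      refine ⟨hxa, (hbd1.2 c hxc.symm hyc.symm hca).mpr (sa_adj hy), ?_⟩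
      intro w hwc hwx hwa
      by_cases hwy : w = y
      · rw [hwy]; exact iff_of_true htwy.1 hcross.symm
      · exact (htwy.2 w hwy hwc).symm.trans (hbd1.2 w hwx hwy hwa).symm
  · rcases hD2 with hbd2 | htwy
    · exfalso
      apply hy'
      refine ⟨hyc, (hbd2.2 a hxa.symm hya.symm hac).mp (sa_adj hx), ?_⟩
      intro w hwa hwy hwc
      by_cases hwx : w = x
      · rw [hwx]; exact iff_of_true htwx.1 hcross
      · exact (htwx.2 w hwx hwa).symm.trans (hbd2.2 w hwx hwy hwc)
    · exfalso
      have h1 : G.Adj y a := (htwx.2 y hcross.ne' hya).mp hcross.symm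
      exact hnadj ((htwy.2 a hya.symm hac).mp h1.symm)

lemma complete_lb (G : SimpleGraph V) (hcomp : ∀ p q : V, p ≠ q → G.Adj p q)
    {S : Finset V} (hS : IsLocalResolving G S) : Fintype.card V - 1 ≤ S.card := by
  by_contra hlt
  push_neg at hlt
  have hT : 2 ≤ (Finset.univ \ S).card := by
    have h1 : (Finset.univ \ S).card = Fintype.card V - S.card := by
      rw [Finset.card_sdiff_of_subset (Finset.subset_univ S), Finset.card_univ]
    have h2 : S.card ≤ Fintype.card V := Finset.card_le_univ S
    omega
  obtain ⟨u, hu, v, hv, huv⟩ := Finset.one_lt_card.mp hT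
  rw [Finset.mem_sdiff] at hu hv
  obtain ⟨w, hwS, hwne⟩ := hS u v (hcomp u v huv) hu.2 hv.2
  apply hwne
  have hwu : w ≠ u := fun h => hu.2 (h ▸ hwS)
  have hwv : w ≠ v := fun h => hv.2 (h ▸ hwS)
  rw [SimpleGraph.dist_eq_one_iff_adj.mpr (hcomp u w hwu.symm),
    SimpleGraph.dist_eq_one_iff_adj.mpr (hcomp v w hwv.symm)]

lemma clique_lb (G : SimpleGraph V) (hc : G.Connected) {K : Finset V}
    (hK : G.IsClique (K : Set V)) (hKcard : K.card = Fintype.card V - 1)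
    (h2 : 2 ≤ Fintype.card V) {S : Finset V} (hS : IsLocalResolving G S) :
    Fintype.card V - 2 ≤ S.card := by
  by_contra hlt
  push_neg at hlt
  have hSle : S.card ≤ Fintype.card V := Finset.card_le_univ S
  have hn3 : 3 ≤ Fintype.card V := by omega
  have hTcard : 3 ≤ (Finset.univ \ S).card := by
    rw [Finset.card_sdiff_of_subset (Finset.subset_univ S), Finset.card_univ]; omega
  -- the unique vertex outside K
  have hKc : (Finset.univ \ K).card = 1 := by
    rw [Finset.card_sdiff_of_subset (Finset.subset_univ K), Finset.card_univ, hKcard]; omega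
  obtain ⟨x, hx⟩ := Finset.card_eq_one.mp hKc
  have hmemK : ∀ z : V, z ≠ x → z ∈ K := by
    intro z hz
    by_contra hzK
    have : z ∈ Finset.univ \ K := Finset.mem_sdiff.mpr ⟨Finset.mem_univ z, hzK⟩
    rw [hx, Finset.mem_singleton] at this
    exact hz this
  -- a neighbor of x
  have hnz : ∃ z₀, G.Adj x z₀ := by
    obtain ⟨y, hy⟩ := Fintype.exists_ne_of_one_lt_card (by omega) x
    have hd : G.dist x y ≠ 0 := (hc.dist_eq_zero_iff).ne.mpr (Ne.symm hy)
    obtain ⟨p, hp⟩ := SimpleGraph.exists_walk_of_dist_ne_zero hd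
    cases p with
    | nil => simp at hd
    | cons h q => exact ⟨_, h⟩
  obtain ⟨z₀, hz₀⟩ := hnz
  by_cases hxS : x ∈ S
  · -- pigeonhole on distances to x among the ≥ 3 vertices outside S
    have hTK : ∀ t ∈ Finset.univ \ S, t ∈ K := by
      intro t ht
      rw [Finset.mem_sdiff] at ht
      exact hmemK t (fun h => ht.2 (h ▸ hxS))
    have hmaps : ∀ t ∈ Finset.univ \ S, G.dist t x ∈ ({1, 2} : Finset ℕ) := by
      intro t ht
      rw [Finset.mem_sdiff] at ht
      have htx : t ≠ x := fun h => ht.2 (h ▸ hxS)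
      have hpos : 0 < G.dist t x := hc.pos_dist_of_ne htx
      have hle2 : G.dist t x ≤ 2 := by
        by_cases htz : t = z₀
        · subst htz
          rw [SimpleGraph.dist_eq_one_iff_adj.mpr hz₀.symm]; omega
        · have hz₀x : z₀ ≠ x := hz₀.ne'
          have hadj1 : G.Adj t z₀ := hK (hmemK t htx) (hmemK z₀ hz₀x) htz
          have := SimpleGraph.dist_le (SimpleGraph.Walk.cons hadj1
            (SimpleGraph.Walk.cons hz₀.symm SimpleGraph.Walk.nil))
          simpa using this
      simp only [Finset.mem_insert, Finset.mem_singleton]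
      omega
    obtain ⟨u, hu, v, hv, huv, heq⟩ :=
      Finset.exists_ne_map_eq_of_card_lt_of_maps_to (by simp; omega) hmaps
    have huS : u ∉ S := (Finset.mem_sdiff.mp hu).2
    have hvS : v ∉ S := (Finset.mem_sdiff.mp hv).2
    have hadj : G.Adj u v := hK (hTK u hu) (hTK v hv) huv
    obtain ⟨w, hwS, hwne⟩ := hS u v hadj huS hvS
    apply hwne
    by_cases hwx : w = x
    · rw [hwx]; exact heq
    · have hwu : w ≠ u := fun h => huS (h ▸ hwS)
      have hwv : w ≠ v := fun h => hvS (h ▸ hwS)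
      rw [SimpleGraph.dist_eq_one_iff_adj.mpr (hK (hTK u hu) (hmemK w hwx) hwu.symm),
        SimpleGraph.dist_eq_one_iff_adj.mpr (hK (hTK v hv) (hmemK w hwx) hwv.symm)]
  · -- x outside S : two clique vertices outside S
    have hcard2 : 2 ≤ ((Finset.univ \ S).erase x).card := by
      by_cases hx' : x ∈ Finset.univ \ S
      · rw [Finset.card_erase_of_mem hx']; omega
      · rw [Finset.erase_eq_of_notMem hx']; omega
    obtain ⟨u, hu, v, hv, huv⟩ := Finset.one_lt_card.mp hcard2
    obtain ⟨hux, hu'⟩ := Finset.mem_erase.mp hu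
    obtain ⟨hvx, hv'⟩ := Finset.mem_erase.mp hv
    have huS : u ∉ S := (Finset.mem_sdiff.mp hu').2
    have hvS : v ∉ S := (Finset.mem_sdiff.mp hv').2
    have hadj : G.Adj u v := hK (hmemK u hux) (hmemK v hvx) huv
    obtain ⟨w, hwS, hwne⟩ := hS u v hadj huS hvS
    apply hwne
    have hwx : w ≠ x := fun h => hxS (h ▸ hwS)
    have hwu : w ≠ u := fun h => huS (h ▸ hwS)
    have hwv : w ≠ v := fun h => hvS (h ▸ hwS)
    rw [SimpleGraph.dist_eq_one_iff_adj.mpr (hK (hmemK u hux) (hmemK w hwx) hwu.symm),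
      SimpleGraph.dist_eq_one_iff_adj.mpr (hK (hmemK v hvx) (hmemK w hwx) hwv.symm)]

end LMDaux

theorem dimL_eq_card_sub_two_iff (G : SimpleGraph V) (hc : G.Connected)
    (h2 : 2 ≤ Fintype.card V) :
    dimL G = Fintype.card V - 2 ↔ G.cliqueNum = Fintype.card V - 1 := by
  classical
  obtain ⟨S₀, hS₀card, hS₀res⟩ := LMDaux.dimL_exists G
  constructor
  · intro h
    have hnotc : ¬ ∀ p q : V, p ≠ q → G.Adj p q := by
      intro hcomp
      have hlb := LMDaux.complete_lb G hcomp hS₀res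
      omega
    push_neg at hnotc
    obtain ⟨a, c, hac, hnadj⟩ := hnotc
    have hedge : ∃ u v : V, G.Adj u v := by
      obtain ⟨w⟩ := hc.preconnected a c
      cases w with
      | nil => exact absurd rfl hac
      | cons h' _ => exact ⟨_, _, h'⟩
    obtain ⟨u₀, v₀, he⟩ := hedge
    have hω2 : 2 ≤ G.cliqueNum := by
      have hcl : G.IsClique (({u₀, v₀} : Finset V) : Set V) := by
        rw [Finset.coe_insert, Finset.coe_singleton]
        exact SimpleGraph.isClique_pair.mpr (fun _ => he)
      have hle := SimpleGraph.IsClique.card_le_cliqueNum (tc := hcl)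
      rwa [Finset.card_pair he.ne] at hle
    have hωle : G.cliqueNum ≤ Fintype.card V - 1 := by
      by_contra hlt
      push_neg at hlt
      obtain ⟨K, hK⟩ := SimpleGraph.exists_isNClique_cliqueNum (G := G)
      have hKcard : K.card = G.cliqueNum := hK.card_eq
      have hKle : K.card ≤ Fintype.card V := Finset.card_le_univ K
      have hKuniv : K = Finset.univ := Finset.eq_univ_of_card K (by omega)
      exact hnadj (hK.isClique (by rw [hKuniv]; exact Finset.mem_coe.mpr (Finset.mem_univ a))
        (by rw [hKuniv]; exact Finset.mem_coe.mpr (Finset.mem_univ c)) hac)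
    have hωge : Fintype.card V - 1 ≤ G.cliqueNum := by
      by_contra hlt
      push_neg at hlt
      have H : ∀ u v w : V, u ≠ v → u ≠ w → v ≠ w →
          (LMDaux.Bd G u v w ∨ LMDaux.Bd G u w v ∨ LMDaux.Bd G v w u) := by
        intro u v w huv huw hvw
        have hcard3 : ({u, v, w} : Finset V).card = 3 := by
          rw [Finset.card_insert_of_notMem (by simp [huv, huw]),
            Finset.card_insert_of_notMem (by simp [hvw]), Finset.card_singleton]
        have hnres : ¬ IsLocalResolving G (Finset.univ \ {u, v, w}) := by
          intro hres
          have hle := LMDaux.dimL_le hres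
          rw [Finset.card_sdiff_of_subset (Finset.subset_univ _), Finset.card_univ, hcard3] at hle
          omega
        unfold IsLocalResolving at hnres
        push_neg at hnres
        obtain ⟨p, q, hpq, hp, hq, heq⟩ := hnres
        have hp' : p ∈ ({u, v, w} : Finset V) := by
          by_contra hh; exact hp (Finset.mem_sdiff.mpr ⟨Finset.mem_univ p, hh⟩)
        have hq' : q ∈ ({u, v, w} : Finset V) := by
          by_contra hh; exact hq (Finset.mem_sdiff.mpr ⟨Finset.mem_univ q, hh⟩)
        have hiff : ∀ z, z ≠ u → z ≠ v → z ≠ w → (G.Adj z p ↔ G.Adj z q) := by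
          intro z h1 h2 h3
          exact LMDaux.adj_iff_of_dist_eq
            (heq z (Finset.mem_sdiff.mpr ⟨Finset.mem_univ z, by simp [h1, h2, h3]⟩))
        simp only [Finset.mem_insert, Finset.mem_singleton] at hp' hq'
        rcases hp' with h1 | h1 | h1 <;> rcases hq' with h2 | h2 | h2 <;>
          rw [h1] at hpq hiff <;> rw [h2] at hpq hiff
        · exact absurd hpq G.irrefl
        · exact Or.inl ⟨hpq, fun z ha hb hc' => hiff z ha hb hc'⟩
        · exact Or.inr (Or.inl ⟨hpq, fun z ha hb hc' => hiff z ha hc' hb⟩)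
        · exact Or.inl (LMDaux.bd_symm ⟨hpq, fun z ha hb hc' => hiff z hb ha hc'⟩)
        · exact absurd hpq G.irrefl
        · exact Or.inr (Or.inr ⟨hpq, fun z ha hb hc' => hiff z hc' ha hb⟩)
        · exact Or.inr (Or.inl (LMDaux.bd_symm ⟨hpq, fun z ha hb hc' => hiff z hb hc' ha⟩))
        · exact Or.inr (Or.inr (LMDaux.bd_symm ⟨hpq, fun z ha hb hc' => hiff z hc' hb ha⟩))
        · exact absurd hpq G.irrefl
      obtain ⟨x, hx⟩ := LMDaux.main_comb G hc a c hac hnadj H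
      have hcl : G.IsClique ((Finset.univ.erase x : Finset V) : Set V) := by
        intro p hp q hq hne
        rw [Finset.mem_coe, Finset.mem_erase] at hp hq
        exact hx p q hp.1 hq.1 hne
      have hle := SimpleGraph.IsClique.card_le_cliqueNum (tc := hcl)
      rw [Finset.card_erase_of_mem (Finset.mem_univ x), Finset.card_univ] at hle
      omega
    omega
  · intro h
    obtain ⟨K, hK⟩ := SimpleGraph.exists_isNClique_cliqueNum (G := G)
    have hKcard : K.card = Fintype.card V - 1 := by rw [hK.card_eq, h]
    have hnotc : ¬ ∀ p q : V, p ≠ q → G.Adj p q := by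
      intro hcomp
      have hcl : G.IsClique ((Finset.univ : Finset V) : Set V) :=
        fun p _ q _ hne => hcomp p q hne
      have hle := SimpleGraph.IsClique.card_le_cliqueNum (tc := hcl)
      rw [Finset.card_univ, h] at hle
      omega
    push_neg at hnotc
    obtain ⟨a, c, hac, hnadj⟩ := hnotc
    have hres : IsLocalResolving G (Finset.univ \ {a, c}) := by
      intro u v huv hu hv
      exfalso
      have hu' : u ∈ ({a, c} : Finset V) := by
        by_contra hh; exact hu (Finset.mem_sdiff.mpr ⟨Finset.mem_univ u, hh⟩)
      have hv' : v ∈ ({a, c} : Finset V) := by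
        by_contra hh; exact hv (Finset.mem_sdiff.mpr ⟨Finset.mem_univ v, hh⟩)
      simp only [Finset.mem_insert, Finset.mem_singleton] at hu' hv'
      rcases hu' with h1 | h1 <;> rcases hv' with h2 | h2 <;> rw [h1, h2] at huv
      · exact absurd huv G.irrefl
      · exact hnadj huv
      · exact hnadj huv.symm
      · exact absurd huv G.irrefl
    have hcard : (Finset.univ \ ({a, c} : Finset V)).card = Fintype.card V - 2 := by
      rw [Finset.card_sdiff_of_subset (Finset.subset_univ _), Finset.card_univ, Finset.card_pair hac]
    have hle : dimL G ≤ Fintype.card V - 2 := by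
      have := LMDaux.dimL_le hres
      omega
    have hge := LMDaux.clique_lb G hc hK.isClique hKcard h2 hS₀res
    omega
end
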